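/- arXiv:1204.5278 — 6 statements merged into one kernel-verified Lean document; each statement's English description precedes it below -/
import Mathlib

section
/- Let μ > 0 and define G_μ(k) = e^{-μ|k|}/(1+|k|)² for k ∈ ℤ. Then for all j, k ∈ ℤ, ∑_{l ∈ ℤ} G_μ(j−l)·G_μ(l−k) ≤ γ·G_μ(j−k), where γ = 4·∑_{k ∈ ℤ} (1+|k|)^{−2}. -/
/-- `G_μ(k) = e^{-μ|k|}/(1+|k|)²` for `k ∈ ℤ`. -/
noncomputable def Gmu (μ : ℝ) (k : ℤ) : ℝ :=
  Real.exp (-μ * |(k : ℝ)|) / (1 + |(k : ℝ)|) ^ 2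

lemma sumNat : Summable (fun n : ℕ => 1 / (1 + (n : ℝ)) ^ 2) := by
  have := (summable_nat_add_iff (f := fun n : ℕ => 1 / (n : ℝ) ^ 2) 1).mpr
    (Real.summable_one_div_nat_pow.mpr one_lt_two)
  exact this.congr (fun n => by push_cast; ring_nf)

lemma sumInt : Summable (fun m : ℤ => 1 / (1 + |(m : ℝ)|) ^ 2) := by
  rw [summable_int_iff_summable_nat_and_neg]
  constructor
  · exact sumNat.congr (fun n => by rw [Int.cast_natCast, Nat.abs_cast])
  · exact sumNat.congr (fun n => by push_cast; rw [abs_neg, Nat.abs_cast])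

lemma key (μ : ℝ) (hμ : 0 < μ) (a b : ℝ) :
    Real.exp (-μ * |a|) / (1 + |a|) ^ 2 * (Real.exp (-μ * |b|) / (1 + |b|) ^ 2) ≤
      Real.exp (-μ * |a + b|) / (1 + |a + b|) ^ 2 *
        (2 / (1 + |a|) ^ 2 + 2 / (1 + |b|) ^ 2) := by
  have ha : (0:ℝ) < 1 + |a| := by positivity
  have hb : (0:ℝ) < 1 + |b| := by positivity
  have hc : (0:ℝ) < 1 + |a + b| := by positivity
  have hexp : Real.exp (-μ * |a|) * Real.exp (-μ * |b|) ≤ Real.exp (-μ * |a + b|) := by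
    rw [← Real.exp_add]
    apply Real.exp_le_exp.mpr
    have := abs_add_le a b
    nlinarith [abs_nonneg a, abs_nonneg b]
  have hpoly : (1 + |a + b|) ^ 2 ≤ 2 * (1 + |a|) ^ 2 + 2 * (1 + |b|) ^ 2 := by
    have := abs_add_le a b
    nlinarith [abs_nonneg a, abs_nonneg b, sq_nonneg (|a| - |b|)]
  rw [div_mul_div_comm]
  rw [div_le_iff₀ (by positivity)]
  have hE : (0:ℝ) < Real.exp (-μ * |a + b|) := Real.exp_pos _
  have expand : Real.exp (-μ * |a + b|) / (1 + |a + b|) ^ 2 *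
      (2 / (1 + |a|) ^ 2 + 2 / (1 + |b|) ^ 2) * ((1 + |a|) ^ 2 * (1 + |b|) ^ 2) =
      Real.exp (-μ * |a + b|) * ((2 * (1 + |b|) ^ 2 + 2 * (1 + |a|) ^ 2) / (1 + |a + b|) ^ 2) := by
    field_simp
  rw [expand]
  calc Real.exp (-μ * |a|) * Real.exp (-μ * |b|)
      ≤ Real.exp (-μ * |a + b|) * 1 := by rw [mul_one]; exact hexp
    _ ≤ _ := by
        apply mul_le_mul_of_nonneg_left _ hE.le
        rw [le_div_iff₀ (by positivity), one_mul]
        linarith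

/-- For `μ > 0` and all `j, k ∈ ℤ`,
`∑_{l ∈ ℤ} G_μ(j−l) G_μ(l−k) ≤ γ G_μ(j−k)` with `γ = 4 ∑_{k ∈ ℤ} (1+|k|)^{-2}`. -/
theorem stmt1 (μ : ℝ) (hμ : 0 < μ) (j k : ℤ) :
    ∑' l : ℤ, Gmu μ (j - l) * Gmu μ (l - k) ≤
      (4 * ∑' m : ℤ, 1 / (1 + |(m : ℝ)|) ^ 2) * Gmu μ (j - k) := by
  set G := Gmu μ (j - k) with hG
  have hGpos : 0 ≤ G := by
    rw [hG, Gmu]; positivity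
  -- majorant
  set H : ℤ → ℝ := fun l =>
    G * (2 / (1 + |((j - l : ℤ) : ℝ)|) ^ 2 + 2 / (1 + |((l - k : ℤ) : ℝ)|) ^ 2) with hH
  have hle : ∀ l : ℤ, Gmu μ (j - l) * Gmu μ (l - k) ≤ H l := by
    intro l
    have := key μ hμ ((j - l : ℤ) : ℝ) ((l - k : ℤ) : ℝ)
    have hab : ((j - l : ℤ) : ℝ) + ((l - k : ℤ) : ℝ) = ((j - k : ℤ) : ℝ) := by push_cast; ring
    rw [hab] at this
    simpa [Gmu, hH, hG, mul_comm] using this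
  have hSa : Summable (fun l : ℤ => 2 / (1 + |((j - l : ℤ) : ℝ)|) ^ 2) := by
    have := (sumInt.mul_left 2).comp_injective (Equiv.subLeft j).injective
    exact this.congr (fun l => by simp [Equiv.subLeft, div_eq_mul_inv])
  have hSb : Summable (fun l : ℤ => 2 / (1 + |((l - k : ℤ) : ℝ)|) ^ 2) := by
    have := (sumInt.mul_left 2).comp_injective (Equiv.subRight k).injective
    exact this.congr (fun l => by simp [Equiv.subRight, div_eq_mul_inv])
  have hHsum : Summable H := by
    exact ((hSa.add hSb).mul_left G)
  have hFsum : Summable (fun l : ℤ => Gmu μ (j - l) * Gmu μ (l - k)) := by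
    apply Summable.of_nonneg_of_le _ hle hHsum
    intro l
    have h1 : 0 ≤ Gmu μ (j - l) := by rw [Gmu]; positivity
    have h2 : 0 ≤ Gmu μ (l - k) := by rw [Gmu]; positivity
    exact mul_nonneg h1 h2
  calc ∑' l, Gmu μ (j - l) * Gmu μ (l - k) ≤ ∑' l, H l := Summable.tsum_le_tsum hle hFsum hHsum
    _ = (4 * ∑' m : ℤ, 1 / (1 + |(m : ℝ)|) ^ 2) * G := by
        rw [hH, tsum_mul_left, Summable.tsum_add hSa hSb]
        have ea : ∑' l : ℤ, 2 / (1 + |((j - l : ℤ) : ℝ)|) ^ 2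
            = 2 * ∑' m : ℤ, 1 / (1 + |(m : ℝ)|) ^ 2 := by
          rw [← tsum_mul_left]
          exact ((Equiv.subLeft j).tsum_eq
            (fun m : ℤ => 2 * (1 / (1 + |(m : ℝ)|) ^ 2))).symm ▸
            (tsum_congr (fun l => by simp [Equiv.subLeft, div_eq_mul_inv]))
        have eb : ∑' l : ℤ, 2 / (1 + |((l - k : ℤ) : ℝ)|) ^ 2
            = 2 * ∑' m : ℤ, 1 / (1 + |(m : ℝ)|) ^ 2 := by
          rw [← tsum_mul_left]
          exact ((Equiv.subRight k).tsum_eq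
            (fun m : ℤ => 2 * (1 / (1 + |(m : ℝ)|) ^ 2))).symm ▸
            (tsum_congr (fun l => by simp [Equiv.subRight, div_eq_mul_inv]))
        rw [ea, eb]
        ring
end

section
/- Let c > 0, μ > 0, n ∈ ℕ, and t ∈ ℝ with c|t| ≤ n·e^{−(μ+1)}. Then ∑_{k=n}^∞ (c|t|)^k/k! ≤ e^{−μ(n − (c/μ)|t|)}. -/
lemma exp_tsum' (x : ℝ) : ∑' k : ℕ, x ^ k / (Nat.factorial k : ℝ) = Real.exp x := by
  rw [Real.exp_eq_exp_ℝ, NormedSpace.exp_eq_tsum_div]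

lemma term_le_exp (x : ℝ) (hx : 0 ≤ x) (m : ℕ) :
    x ^ m / (Nat.factorial m : ℝ) ≤ Real.exp x := by
  rw [← exp_tsum' x]
  exact Summable.le_tsum (Real.summable_pow_div_factorial x) m
    (fun j _ => by positivity)

/-- Stirling-type tail estimate: if `c > 0`, `μ > 0`, `n ∈ ℕ`, `t ∈ ℝ` with
`c|t| ≤ n e^{-(μ+1)}`, then `∑_{k=n}^∞ (c|t|)^k/k! ≤ e^{-μ(n - (c/μ)|t|)}`. -/
theorem stmt4 (c μ : ℝ) (hc : 0 < c) (hμ : 0 < μ) (n : ℕ) (t : ℝ)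
    (h : c * |t| ≤ (n : ℝ) * Real.exp (-(μ + 1))) :
    ∑' k : ℕ, (c * |t|) ^ (k + n) / (Nat.factorial (k + n) : ℝ) ≤
      Real.exp (-μ * ((n : ℝ) - (c / μ) * |t|)) := by
  set x := c * |t| with hxdef
  have hx : 0 ≤ x := by positivity
  -- Step 1: tail ≤ (x^n/n!) * exp x
  have hsum2 : Summable (fun k : ℕ => x ^ n / (Nat.factorial n : ℝ) * (x ^ k / (Nat.factorial k : ℝ))) :=
    (Real.summable_pow_div_factorial x).mul_left _
  have hterm : ∀ k : ℕ, x ^ (k + n) / (Nat.factorial (k + n) : ℝ) ≤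
      x ^ n / (Nat.factorial n : ℝ) * (x ^ k / (Nat.factorial k : ℝ)) := by
    intro k
    have hd : (Nat.factorial k * Nat.factorial n : ℝ) ≤ (Nat.factorial (k + n) : ℝ) := by
      exact_mod_cast Nat.le_of_dvd (Nat.factorial_pos _)
        (Nat.factorial_mul_factorial_dvd_factorial_add k n)
    have hpos : (0 : ℝ) < Nat.factorial k * Nat.factorial n := by positivity
    calc x ^ (k + n) / (Nat.factorial (k + n) : ℝ)
        ≤ x ^ (k + n) / (Nat.factorial k * Nat.factorial n : ℝ) :=
          div_le_div_of_nonneg_left (by positivity) hpos hd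
      _ = x ^ n / (Nat.factorial n : ℝ) * (x ^ k / (Nat.factorial k : ℝ)) := by
          rw [pow_add]; ring
  have hsum1 : Summable (fun k : ℕ => x ^ (k + n) / (Nat.factorial (k + n) : ℝ)) :=
    Summable.of_nonneg_of_le (fun k => by positivity) hterm hsum2
  have step1 : ∑' k : ℕ, x ^ (k + n) / (Nat.factorial (k + n) : ℝ) ≤
      x ^ n / (Nat.factorial n : ℝ) * Real.exp x := by
    calc ∑' k : ℕ, x ^ (k + n) / (Nat.factorial (k + n) : ℝ)
        ≤ ∑' k : ℕ, x ^ n / (Nat.factorial n : ℝ) * (x ^ k / (Nat.factorial k : ℝ)) :=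
          Summable.tsum_le_tsum hterm hsum1 hsum2
      _ = x ^ n / (Nat.factorial n : ℝ) * Real.exp x := by
          rw [tsum_mul_left, exp_tsum']
  -- Step 2: x^n/n! ≤ exp (-μ * n)
  have step2 : x ^ n / (Nat.factorial n : ℝ) ≤ Real.exp (-μ * n) := by
    rcases Nat.eq_zero_or_pos n with hn | hn
    · subst hn; simp
    · have hnpos : (0 : ℝ) < n := by exact_mod_cast hn
      have h1 : (n : ℝ) ^ n ≤ (Nat.factorial n : ℝ) * Real.exp n := by
        have := term_le_exp (n : ℝ) (le_of_lt hnpos) n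
        rw [div_le_iff₀ (by positivity)] at this
        linarith [this]
      have hbase : x * Real.exp 1 / n ≤ Real.exp (-μ) := by
        rw [div_le_iff₀ hnpos]
        calc x * Real.exp 1 ≤ (n : ℝ) * Real.exp (-(μ + 1)) * Real.exp 1 := by
              apply mul_le_mul_of_nonneg_right h (Real.exp_nonneg 1)
          _ = Real.exp (-μ) * n := by
              rw [mul_assoc, ← Real.exp_add]; ring_nf
      have hbase0 : 0 ≤ x * Real.exp 1 / n := by positivity
      have h2 : x ^ n / (Nat.factorial n : ℝ) ≤ (x * Real.exp 1 / n) ^ n := by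
        have key : (x * Real.exp 1 / (n : ℝ)) ^ n = x ^ n * Real.exp n / (n : ℝ) ^ n := by
          rw [div_pow, mul_pow, ← Real.exp_nat_mul, mul_one]
        rw [key, div_le_div_iff₀ (by positivity) (by positivity)]
        calc x ^ n * (n : ℝ) ^ n ≤ x ^ n * ((Nat.factorial n : ℝ) * Real.exp n) :=
              mul_le_mul_of_nonneg_left h1 (by positivity)
          _ = x ^ n * Real.exp n * (Nat.factorial n : ℝ) := by ring
      calc x ^ n / (Nat.factorial n : ℝ) ≤ (x * Real.exp 1 / n) ^ n := h2
        _ ≤ Real.exp (-μ) ^ n := pow_le_pow_left₀ hbase0 hbase n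
        _ = Real.exp (-μ * n) := by rw [← Real.exp_nat_mul]; ring_nf
  -- combine
  have hrhs : Real.exp (-μ * ((n : ℝ) - (c / μ) * |t|)) = Real.exp (-μ * n) * Real.exp x := by
    rw [← Real.exp_add]
    congr 1
    field_simp [hxdef]
    ring
  rw [hrhs]
  calc ∑' k : ℕ, x ^ (k + n) / (Nat.factorial (k + n) : ℝ)
      ≤ x ^ n / (Nat.factorial n : ℝ) * Real.exp x := step1
    _ ≤ Real.exp (-μ * n) * Real.exp x :=
        mul_le_mul_of_nonneg_right step2 (Real.exp_nonneg x)
end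

section
/- For any c > 0, μ > 0, n ∈ ℕ with n ≥ 0, and any t ∈ ℝ, the tail sum satisfies ∑_{k=n}^∞ (c|t|)^k/k! ≤ e^{−μ(n − v|t|)} where v = c·(e^{μ+1} + 1/μ). -/
open scoped Nat

lemma aux_pow_div_factorial_le_exp (n : ℕ) :
    (n : ℝ) ^ n / (n ! : ℝ) ≤ Real.exp n := by
  rw [Real.exp_eq_exp_ℝ, NormedSpace.exp_eq_tsum_div]
  exact Summable.le_tsum (Real.summable_pow_div_factorial (n : ℝ)) n
    (fun k _ => by positivity)

lemma aux_tail_le (x : ℝ) (hx : 0 ≤ x) (n : ℕ) :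
    ∑' k : ℕ, x ^ (k + n) / ((k + n)! : ℝ) ≤ x ^ n / (n ! : ℝ) * Real.exp x := by
  have hsum : Summable (fun k : ℕ => x ^ (k + n) / ((k + n)! : ℝ)) :=
    ((summable_nat_add_iff n).2 (Real.summable_pow_div_factorial x))
  have hsum2 : Summable (fun k : ℕ => x ^ n / (n ! : ℝ) * (x ^ k / (k ! : ℝ))) :=
    (Real.summable_pow_div_factorial x).mul_left _
  have hle : ∀ k : ℕ, x ^ (k + n) / ((k + n)! : ℝ) ≤
      x ^ n / (n ! : ℝ) * (x ^ k / (k ! : ℝ)) := by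
    intro k
    have hdvd : (k ! * n ! : ℕ) ≤ (k + n)! :=
      Nat.le_of_dvd (Nat.factorial_pos _) (Nat.factorial_mul_factorial_dvd_factorial_add k n)
    have h1 : ((k ! * n ! : ℕ) : ℝ) ≤ ((k + n)! : ℝ) := by exact_mod_cast hdvd
    rw [pow_add, div_mul_div_comm, mul_comm ((n !: ℝ)) _]
    push_cast at h1
    rw [div_le_div_iff₀ (by positivity) (by positivity)]
    calc x ^ k * x ^ n * ((k ! : ℝ) * (n ! : ℝ))
        ≤ x ^ k * x ^ n * ((k + n)! : ℝ) := by
          apply mul_le_mul_of_nonneg_left h1 (by positivity)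
      _ = x ^ n * x ^ k * ((k + n)! : ℝ) := by ring
  calc ∑' k : ℕ, x ^ (k + n) / ((k + n)! : ℝ)
      ≤ ∑' k : ℕ, x ^ n / (n ! : ℝ) * (x ^ k / (k ! : ℝ)) :=
        Summable.tsum_le_tsum hle hsum hsum2
    _ = x ^ n / (n ! : ℝ) * ∑' k : ℕ, x ^ k / (k ! : ℝ) := tsum_mul_left
    _ = x ^ n / (n ! : ℝ) * Real.exp x := by
        rw [Real.exp_eq_exp_ℝ, NormedSpace.exp_eq_tsum_div]

/-- For any `c > 0`, `μ > 0`, `n ∈ ℕ` and `t ∈ ℝ`,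
`∑_{k=n}^∞ (c|t|)^k/k! ≤ e^{-μ(n - v|t|)}` where `v = c (e^{μ+1} + 1/μ)`. -/
theorem stmt5 (c μ : ℝ) (hc : 0 < c) (hμ : 0 < μ) (n : ℕ) (t : ℝ) :
    ∑' k : ℕ, (c * |t|) ^ (k + n) / (Nat.factorial (k + n) : ℝ) ≤
      Real.exp (-μ * ((n : ℝ) - c * (Real.exp (μ + 1) + 1 / μ) * |t|)) := by
  set x : ℝ := c * |t| with hxdef
  have hx : 0 ≤ x := by positivity
  have hE : -μ * ((n : ℝ) - c * (Real.exp (μ + 1) + 1 / μ) * |t|)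
      = -μ * n + μ * Real.exp (μ + 1) * x + x := by
    field_simp
    ring
  have htail := aux_tail_le x hx n
  by_cases hcase : x * Real.exp (μ + 1) ≤ n
  · -- Stirling-type case
    have hfac : ((n : ℝ) / Real.exp 1) ^ n ≤ (n ! : ℝ) := by
      have h := aux_pow_div_factorial_le_exp n
      have hexp : Real.exp (n : ℝ) = (Real.exp 1) ^ n := by
        rw [← Real.exp_nat_mul]; ring_nf
      rw [div_pow, div_le_iff₀ (by positivity)]
      rw [div_le_iff₀ (by positivity), hexp] at h
      linarith [h]
    have hkey : x ^ n / (n ! : ℝ) ≤ Real.exp (-μ * n) := by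
      have h1 : (x * Real.exp μ) ^ n ≤ ((n : ℝ) / Real.exp 1) ^ n := by
        apply pow_le_pow_left₀ (by positivity)
        rw [le_div_iff₀ (Real.exp_pos 1)]
        calc x * Real.exp μ * Real.exp 1 = x * Real.exp (μ + 1) := by
              rw [Real.exp_add]; ring
          _ ≤ n := hcase
      have h2 : x ^ n * Real.exp (μ * n) ≤ (n ! : ℝ) := by
        calc x ^ n * Real.exp (μ * n) = (x * Real.exp μ) ^ n := by
              have hpow : Real.exp μ ^ n = Real.exp (μ * n) := by
                rw [← Real.exp_nat_mul, mul_comm]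
              rw [mul_pow x (Real.exp μ) n, hpow]
          _ ≤ ((n : ℝ) / Real.exp 1) ^ n := h1
          _ ≤ (n ! : ℝ) := hfac
      rw [div_le_iff₀ (by exact_mod_cast Nat.factorial_pos n)]
      have hinv : Real.exp (-μ * (n : ℝ)) * Real.exp (μ * (n : ℝ)) = 1 := by
        rw [← Real.exp_add, neg_mul, neg_add_cancel, Real.exp_zero]
      have h3 := mul_le_mul_of_nonneg_left h2 (Real.exp_pos (-μ * (n : ℝ))).le
      have h4 : Real.exp (-μ * (n : ℝ)) * (x ^ n * Real.exp (μ * (n : ℝ)))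
          = x ^ n * (Real.exp (-μ * (n : ℝ)) * Real.exp (μ * (n : ℝ))) := by ring
      rw [h4, hinv, mul_one] at h3
      exact h3
    calc ∑' k : ℕ, x ^ (k + n) / ((k + n)! : ℝ)
        ≤ x ^ n / (n ! : ℝ) * Real.exp x := htail
      _ ≤ Real.exp (-μ * n) * Real.exp x := by
          apply mul_le_mul_of_nonneg_right hkey (Real.exp_pos x).le
      _ = Real.exp (-μ * n + x) := by rw [← Real.exp_add]
      _ ≤ Real.exp (-μ * ((n : ℝ) - c * (Real.exp (μ + 1) + 1 / μ) * |t|)) := by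
          rw [hE, Real.exp_le_exp]
          nlinarith [mul_nonneg (mul_nonneg hμ.le (Real.exp_pos (μ + 1)).le) hx]
  · -- large |t| case: tail ≤ exp x
    push_neg at hcase
    have hfull : ∑' k : ℕ, x ^ (k + n) / ((k + n)! : ℝ) ≤ Real.exp x := by
      rw [Real.exp_eq_exp_ℝ, NormedSpace.exp_eq_tsum_div]
      have hinj : Function.Injective (fun k : ℕ => k + n) := fun a b h => by
        simpa using h
      exact Summable.tsum_le_tsum_of_inj (fun k : ℕ => k + n) hinj
        (fun m _ => by positivity)
        (fun k => le_rfl)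
        ((summable_nat_add_iff n).2 (Real.summable_pow_div_factorial x))
        (Real.summable_pow_div_factorial x)
    calc ∑' k : ℕ, x ^ (k + n) / ((k + n)! : ℝ) ≤ Real.exp x := hfull
      _ ≤ Real.exp (-μ * ((n : ℝ) - c * (Real.exp (μ + 1) + 1 / μ) * |t|)) := by
          rw [hE, Real.exp_le_exp]
          nlinarith [hcase, hμ]
end

section
/- Let L(t) and P(t) be the Jacobi and skew-adjoint operators built from a solution (a_n(t), b_n(t)) of the Toda equations ȧ_n = a_n(b_{n+1} − b_n), ḃ_n = 2(a_n² − a_{n−1}²). Then dL/dt = [P(t), L(t)], i.e. (P,L) is a Lax pair. -/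
/-- The Jacobi operator `(Lf)_n = a_n f_{n+1} + a_{n-1} f_{n-1} + b_n f_n`
acting formally on sequences. -/
def Lop (a b : ℤ → ℝ) (f : ℤ → ℝ) (n : ℤ) : ℝ :=
  a n * f (n + 1) + a (n - 1) * f (n - 1) + b n * f n

/-- The operator `(Pf)_n = a_n f_{n+1} − a_{n-1} f_{n-1}` acting formally on
sequences. -/
def Pop (a : ℤ → ℝ) (f : ℤ → ℝ) (n : ℤ) : ℝ :=
  a n * f (n + 1) - a (n - 1) * f (n - 1)

/-- Lax pair for the Toda lattice: if `(a_n(t), b_n(t))` is a bounded solution of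
`ȧ_n = a_n (b_{n+1} − b_n)`, `ḃ_n = 2(a_n² − a_{n-1}²)`, then
`dL/dt = [P(t), L(t)] = P(t)L(t) − L(t)P(t)` (applied to any sequence `f` at any
site `n`). -/
theorem stmt11 (a b : ℝ → ℤ → ℝ)
    (hbdd : ∀ t : ℝ, ∃ C : ℝ, ∀ n : ℤ, |a t n| ≤ C ∧ |b t n| ≤ C)
    (ha : ∀ (t : ℝ) (n : ℤ),
      HasDerivAt (fun s => a s n) (a t n * (b t (n + 1) - b t n)) t)
    (hb : ∀ (t : ℝ) (n : ℤ),
      HasDerivAt (fun s => b s n) (2 * ((a t n) ^ 2 - (a t (n - 1)) ^ 2)) t)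
    (t : ℝ) (f : ℤ → ℝ) (n : ℤ) :
    HasDerivAt (fun s => Lop (a s) (b s) f n)
      (Pop (a t) (Lop (a t) (b t) f) n - Lop (a t) (b t) (Pop (a t) f) n) t := by
  have h : HasDerivAt (fun s => Lop (a s) (b s) f n) _ t := (((ha t n).mul_const (f (n + 1))).add
      ((ha t (n - 1)).mul_const (f (n - 1)))).add ((hb t n).mul_const (f n))
  convert h using 1
  simp only [Lop, Pop]
  have e1 : n + 1 - 1 = n := by ring
  have e2 : n - 1 + 1 = n := by ring
  rw [e1, e2]
  ring
end

section
/- Let κ > 0 and define f(x,t) = 1 + exp(−2κx + 2 sinh(κ)t). For the one-soliton Toda solution a_n(t) = (1/2)·√(f(n−1,t)f(n+1,t))/f(n,t) and b_n(t) = (1/2)(f'(n,t)/f(n,t) − f'(n−1,t)/f(n−1,t)) (with ' = ∂/∂t), at t = 0 one has sup_n a_n(0) = a_0(0) = cosh(κ)/2 and sup_n |b_n(0)| = |b_0(0)| = sinh(κ)tanh(κ)/2. -/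
/-- `f(x,t) = 1 + exp(−2κx + 2 sinh(κ) t)` for the one-soliton Toda solution. -/
noncomputable def solF (κ x t : ℝ) : ℝ :=
  1 + Real.exp (-2 * κ * x + 2 * Real.sinh κ * t)

/-- `∂f/∂t`. -/
noncomputable def solF' (κ x t : ℝ) : ℝ :=
  2 * Real.sinh κ * Real.exp (-2 * κ * x + 2 * Real.sinh κ * t)

/-- The Flaschka coefficient `a_n(t)` of the one-soliton Toda solution. -/
noncomputable def solA (κ : ℝ) (n : ℤ) (t : ℝ) : ℝ :=
  (1 / 2) * Real.sqrt (solF κ ((n : ℝ) - 1) t * solF κ ((n : ℝ) + 1) t) / solF κ (n : ℝ) t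

/-- The Flaschka coefficient `b_n(t)` of the one-soliton Toda solution. -/
noncomputable def solB (κ : ℝ) (n : ℤ) (t : ℝ) : ℝ :=
  (1 / 2) * (solF' κ (n : ℝ) t / solF κ (n : ℝ) t
    - solF' κ ((n : ℝ) - 1) t / solF κ ((n : ℝ) - 1) t)

set_option maxHeartbeats 1000000 in
/-- For the one-soliton with `κ > 0`: at `t = 0`,
`sup_n a_n(0) = a_0(0) = cosh(κ)/2` and `sup_n |b_n(0)| = |b_0(0)| = sinh(κ)tanh(κ)/2`. -/
theorem stmt13 (κ : ℝ) (hκ : 0 < κ) :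
    (∀ n : ℤ, solA κ n 0 ≤ Real.cosh κ / 2) ∧
    solA κ 0 0 = Real.cosh κ / 2 ∧
    (∀ n : ℤ, |solB κ n 0| ≤ Real.sinh κ * Real.tanh κ / 2) ∧
    |solB κ 0 0| = Real.sinh κ * Real.tanh κ / 2 := by
  have hp : (0:ℝ) < Real.exp κ := Real.exp_pos _
  set p := Real.exp κ with hpdef
  have hp1 : 1 < p := by
    have := Real.exp_lt_exp.mpr hκ
    rwa [Real.exp_zero] at this
  have hpv : p * p⁻¹ = 1 := mul_inv_cancel₀ hp.ne'
  have hs : 0 < Real.sinh κ := Real.sinh_pos_iff.mpr hκ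
  set s := Real.sinh κ with hsdef
  have hc : Real.cosh κ = (p + p⁻¹) / 2 := by
    rw [Real.cosh_eq, hpdef, Real.exp_neg]
  have htanh : Real.tanh κ = (p ^ 2 - 1) / (p ^ 2 + 1) := by
    have hden : (0:ℝ) < p + p⁻¹ := by positivity
    rw [Real.tanh_eq_sinh_div_cosh, Real.sinh_eq, Real.cosh_eq, hpdef, Real.exp_neg]
    rw [div_div_div_eq]
    field_simp
  -- values at n = 0
  have hE0 : Real.exp (-2 * κ * ((0:ℤ):ℝ) + 2 * s * 0) = 1 := by
    push_cast; norm_num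
  have hEm : Real.exp (-2 * κ * (((0:ℤ):ℝ) - 1) + 2 * s * 0) = p ^ 2 := by
    rw [hpdef, sq, ← Real.exp_add]; push_cast; ring_nf
  have hEp : Real.exp (-2 * κ * (((0:ℤ):ℝ) + 1) + 2 * s * 0) = (p⁻¹) ^ 2 := by
    rw [hpdef, sq, ← Real.exp_neg, ← Real.exp_add]; push_cast; ring_nf
  refine ⟨?_, ?_, ?_, ?_⟩
  · -- sup bound for a
    intro n
    have hu : (0:ℝ) < Real.exp (-2 * κ * (n:ℝ)) := Real.exp_pos _
    set u := Real.exp (-2 * κ * (n:ℝ)) with hudef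
    have hm : Real.exp (-2 * κ * ((n:ℝ) - 1)) = u * p ^ 2 := by
      rw [hudef, hpdef, sq, ← Real.exp_add, ← Real.exp_add]; congr 1; ring
    have hP : Real.exp (-2 * κ * ((n:ℝ) + 1)) = u * (p⁻¹) ^ 2 := by
      rw [hudef, hpdef, sq, ← Real.exp_neg, ← Real.exp_add, ← Real.exp_add]; congr 1; ring
    unfold solA solF
    simp only [mul_zero, add_zero, hm, hP]
    have hD : (0:ℝ) < 1 + u := by linarith
    have hsq : Real.sqrt ((1 + u * p ^ 2) * (1 + u * p⁻¹ ^ 2)) ≤ Real.cosh κ * (1 + u) := by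
      have h1 : (1 + u * p ^ 2) * (1 + u * p⁻¹ ^ 2) ≤ (Real.cosh κ * (1 + u)) ^ 2 := by
        rw [hc]
        have h3 : (p * p⁻¹ - 1) * (1 - u ^ 2 * (p * p⁻¹)) = 0 := by rw [hpv]; ring
        nlinarith [sq_nonneg ((p - p⁻¹) * (1 - u)), h3]
      calc Real.sqrt ((1 + u * p ^ 2) * (1 + u * p⁻¹ ^ 2))
          ≤ Real.sqrt ((Real.cosh κ * (1 + u)) ^ 2) := Real.sqrt_le_sqrt h1
        _ = Real.cosh κ * (1 + u) := Real.sqrt_sq (by positivity)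
    rw [div_le_iff₀ hD]
    nlinarith [Real.sqrt_nonneg ((1 + u * p ^ 2) * (1 + u * p⁻¹ ^ 2))]
  · -- a_0(0) = cosh κ / 2
    unfold solA solF
    rw [hE0, hEm, hEp]
    have hprod : (1 + p ^ 2) * (1 + p⁻¹ ^ 2) = (p + p⁻¹) ^ 2 := by
      field_simp; ring
    rw [hprod, Real.sqrt_sq (by positivity), hc]
    norm_num
    ring
  · -- sup bound for b
    intro n
    have hu : (0:ℝ) < Real.exp (-2 * κ * (n:ℝ)) := Real.exp_pos _
    set u := Real.exp (-2 * κ * (n:ℝ)) with hudef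
    have hm : Real.exp (-2 * κ * ((n:ℝ) - 1)) = u * p ^ 2 := by
      rw [hudef, hpdef, sq, ← Real.exp_add, ← Real.exp_add]; congr 1; ring
    have hD1 : (0:ℝ) < 1 + u := by linarith
    have hD2 : (0:ℝ) < 1 + u * p ^ 2 := by positivity
    have hkey : 0 ≤ (1 - u) * (1 - u * p ^ 2) := by
      rcases le_or_gt 1 n with hn | hn
      · have hn' : (1:ℝ) ≤ (n:ℝ) := by exact_mod_cast hn
        have h1 : u ≤ 1 := by
          rw [hudef, Real.exp_le_one_iff]; nlinarith
        have h2 : u * p ^ 2 ≤ 1 := by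
          rw [← hm, Real.exp_le_one_iff]; nlinarith
        nlinarith
      · have hn0 : n ≤ 0 := by omega
        have hn' : (n:ℝ) ≤ 0 := by exact_mod_cast hn0
        have h1 : 1 ≤ u := by
          rw [hudef, Real.one_le_exp_iff]; nlinarith
        have h2 : 1 ≤ u * p ^ 2 := by
          rw [← hm, Real.one_le_exp_iff]; nlinarith
        nlinarith
    have hb : solB κ n 0 = -(s * (u * (p ^ 2 - 1)) / ((1 + u) * (1 + u * p ^ 2))) := by
      unfold solB solF solF'
      simp only [mul_zero, add_zero, hm]
      rw [← hsdef, ← hudef]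
      field_simp [hD1.ne', hD2.ne']
      ring
    rw [hb, abs_neg, abs_of_nonneg (div_nonneg
      (mul_nonneg hs.le (mul_nonneg hu.le (by nlinarith))) (by positivity)), htanh]
    rw [show s * ((p ^ 2 - 1) / (p ^ 2 + 1)) / 2 = s * (p ^ 2 - 1) / ((p ^ 2 + 1) * 2) by
      field_simp]
    rw [div_le_div_iff₀ (by positivity) (by positivity)]
    nlinarith [mul_nonneg (mul_nonneg hs.le (by nlinarith : (0:ℝ) ≤ p ^ 2 - 1)) hkey]
  · -- |b_0(0)| = sinh κ tanh κ / 2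
    have hb0 : solB κ 0 0 = -(s * (p ^ 2 - 1) / ((p ^ 2 + 1) * 2)) := by
      unfold solB solF solF'
      rw [hE0, hEm]
      have : (0:ℝ) < 1 + p ^ 2 := by positivity
      field_simp
      ring
    rw [hb0, abs_neg, abs_of_nonneg (div_nonneg
      (mul_nonneg hs.le (by nlinarith)) (by positivity)), htanh]
    rw [show s * ((p ^ 2 - 1) / (p ^ 2 + 1)) / 2 = s * (p ^ 2 - 1) / ((p ^ 2 + 1) * 2) by
      field_simp]
end

section
/- For j ≥ 0 the quantity η^{(j+1)} = ⟨δ_n, (S⁺ + S⁻ + I)^{j+1} δ_n⟩ = ∑_{k even, 0≤k≤j+1} C(j+1,k)·C(k,k/2) and ξ^{(j+1)} = ⟨δ_{n+1}, (S⁺ + S⁻ + I)^{j+1} δ_n⟩ = ∑_{k odd, 0≤k≤j+1} C(j+1,k)·C(k,(k+1)/2) satisfy η^{(j+1)} ≤ 2·ξ^{(j+1)} and ξ^{(j+1)} ≤ 3^j. -/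
/-- Right shift `(S⁺ f)_n = f_{n+1}` as a linear endomorphism of sequences. -/
def Splus : (ℤ → ℝ) →ₗ[ℝ] (ℤ → ℝ) where
  toFun f := fun n => f (n + 1)
  map_add' _ _ := rfl
  map_smul' _ _ := rfl

/-- Left shift `(S⁻ f)_n = f_{n-1}` as a linear endomorphism of sequences. -/
def Sminus : (ℤ → ℝ) →ₗ[ℝ] (ℤ → ℝ) where
  toFun f := fun n => f (n - 1)
  map_add' _ _ := rfl
  map_smul' _ _ := rfl

/-- The standard basis vector `δ_n`. -/
def deltaZ (n : ℤ) : ℤ → ℝ := fun m => if m = n then 1 else 0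

def cpath : ℕ → ℤ → ℕ
  | 0, d => if d = 0 then 1 else 0
  | m + 1, d => cpath m (d - 1) + cpath m d + cpath m (d + 1)

def bsum (m d : ℕ) : ℕ :=
  ∑ k ∈ Finset.range (m + 1),
    if k % 2 = d % 2 then Nat.choose m k * Nat.choose k ((k + d) / 2) else 0

lemma cpath_neg (m : ℕ) : ∀ d : ℤ, cpath m (-d) = cpath m d := by
  induction m with
  | zero => intro d; simp [cpath, neg_eq_zero]
  | succ m ih =>
    intro d
    simp only [cpath]
    rw [show -d - 1 = -(d + 1) by ring, show -d + 1 = -(d - 1) by ring, ih, ih, ih]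
    ring

lemma sum_shift (m d : ℕ) :
    (∑ i ∈ Finset.range (m + 1),
      if i % 2 = d % 2 then Nat.choose m (i + 1) * Nat.choose (i + 1) ((i + d) / 2 + 1) else 0)
      = bsum m (d + 1) := by
  unfold bsum
  conv_lhs => rw [Finset.sum_range_succ]
  conv_rhs => rw [Finset.sum_range_succ']
  have h0 : (if 0 % 2 = (d + 1) % 2 then
      Nat.choose m 0 * Nat.choose 0 ((0 + (d + 1)) / 2) else 0) = 0 := by
    split_ifs with h
    · obtain ⟨y, hy⟩ : ∃ y, (0 + (d + 1)) / 2 = y + 1 := ⟨(d + 1) / 2 - 1, by omega⟩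
      rw [hy, Nat.choose_zero_succ, mul_zero]
    · rfl
  have hm : (if m % 2 = d % 2 then
      Nat.choose m (m + 1) * Nat.choose (m + 1) ((m + d) / 2 + 1) else 0) = 0 := by
    simp [Nat.choose_succ_self]
  rw [h0, add_zero, hm, add_zero]
  refine Finset.sum_congr rfl fun i _ => ?_
  have hc : (i + 1) % 2 = (d + 1) % 2 ↔ i % 2 = d % 2 := by omega
  have ha : (i + 1 + (d + 1)) / 2 = (i + d) / 2 + 1 := by omega
  rw [if_congr hc rfl rfl, ha]

lemma bsum_succ_succ (m d : ℕ) :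
    bsum (m + 1) (d + 1) = bsum m d + bsum m (d + 1) + bsum m (d + 2) := by
  have key : ∀ i ∈ Finset.range (m + 1),
      (if (i + 1) % 2 = (d + 1) % 2 then
        Nat.choose (m + 1) (i + 1) * Nat.choose (i + 1) ((i + 1 + (d + 1)) / 2) else 0)
      = ((if i % 2 = d % 2 then Nat.choose m i * Nat.choose i ((i + d) / 2) else 0)
        + (if i % 2 = (d + 2) % 2 then Nat.choose m i * Nat.choose i ((i + (d + 2)) / 2) else 0))
        + (if i % 2 = d % 2 then Nat.choose m (i + 1) * Nat.choose (i + 1) ((i + d) / 2 + 1) else 0) := by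
    intro i _
    by_cases h : i % 2 = d % 2
    · have h2 : (i + 1) % 2 = (d + 1) % 2 := by omega
      have h3 : i % 2 = (d + 2) % 2 := by omega
      simp only [if_pos h, if_pos h2, if_pos h3]
      obtain ⟨s, hs⟩ : ∃ s, i + d = 2 * s := ⟨(i + d) / 2, by omega⟩
      have e1 : (i + 1 + (d + 1)) / 2 = s + 1 := by omega
      have e2 : (i + d) / 2 = s := by omega
      have e3 : (i + (d + 2)) / 2 = s + 1 := by omega
      rw [e1, e2, e3, Nat.choose_succ_succ m i, Nat.choose_succ_succ i s]
      ring
    · have h2 : ¬ ((i + 1) % 2 = (d + 1) % 2) := by omega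
      have h3 : ¬ (i % 2 = (d + 2) % 2) := by omega
      simp only [if_neg h, if_neg h2, if_neg h3, add_zero]
  have f0 : (if 0 % 2 = (d + 1) % 2 then
      Nat.choose (m + 1) 0 * Nat.choose 0 ((0 + (d + 1)) / 2) else 0) = 0 := by
    split_ifs with h
    · obtain ⟨y, hy⟩ : ∃ y, (0 + (d + 1)) / 2 = y + 1 := ⟨(d + 1) / 2 - 1, by omega⟩
      rw [hy, Nat.choose_zero_succ, mul_zero]
    · rfl
  conv_lhs => rw [bsum, Finset.sum_range_succ']
  rw [Finset.sum_congr rfl key, f0, add_zero, Finset.sum_add_distrib,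
    Finset.sum_add_distrib, sum_shift]
  unfold bsum
  ring

lemma sum_shift_zero (m : ℕ) :
    bsum m 0 = (∑ i ∈ Finset.range (m + 1),
      if i % 2 = 1 then Nat.choose m (i + 1) * Nat.choose (i + 1) ((i + 1) / 2) else 0) + 1 := by
  unfold bsum
  conv_lhs => rw [Finset.sum_range_succ']
  conv_rhs => rw [Finset.sum_range_succ]
  have hm : (if m % 2 = 1 then
      Nat.choose m (m + 1) * Nat.choose (m + 1) ((m + 1) / 2) else 0) = 0 := by
    simp [Nat.choose_succ_self]
  have h0 : (if 0 % 2 = 0 % 2 then Nat.choose m 0 * Nat.choose 0 ((0 + 0) / 2) else 0) = 1 := by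
    norm_num
  rw [hm, add_zero, h0]
  congr 1
  refine Finset.sum_congr rfl fun i _ => ?_
  have hc : (i + 1) % 2 = 0 % 2 ↔ i % 2 = 1 := by omega
  have ha : (i + 1 + 0) / 2 = (i + 1) / 2 := by omega
  rw [if_congr hc rfl rfl, ha]

lemma bsum_succ_zero (m : ℕ) : bsum (m + 1) 0 = bsum m 0 + 2 * bsum m 1 := by
  have key : ∀ i ∈ Finset.range (m + 1),
      (if (i + 1) % 2 = 0 % 2 then
        Nat.choose (m + 1) (i + 1) * Nat.choose (i + 1) ((i + 1 + 0) / 2) else 0)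
      = 2 * (if i % 2 = 1 % 2 then Nat.choose m i * Nat.choose i ((i + 1) / 2) else 0)
        + (if i % 2 = 1 then Nat.choose m (i + 1) * Nat.choose (i + 1) ((i + 1) / 2) else 0) := by
    intro i _
    by_cases h : i % 2 = 1
    · have h2 : (i + 1) % 2 = 0 % 2 := by omega
      simp only [if_pos h, if_pos h2, if_pos (show i % 2 = 1 % 2 from h)]
      obtain ⟨t, ht⟩ : ∃ t, i = 2 * t + 1 := ⟨i / 2, by omega⟩
      have e1 : (i + 1 + 0) / 2 = t + 1 := by omega
      have e2 : (i + 1) / 2 = t + 1 := by omega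
      have sym : Nat.choose i t = Nat.choose i (t + 1) := by
        subst ht
        have := Nat.choose_symm (n := 2 * t + 1) (k := t + 1) (by omega)
        simpa [show 2 * t + 1 - (t + 1) = t by omega] using this
      rw [e1]
      rw [Nat.choose_succ_succ m i, Nat.choose_succ_succ i t, sym]
      ring
    · have h2 : ¬ ((i + 1) % 2 = 0 % 2) := by omega
      simp only [if_neg h, if_neg h2, if_neg (show ¬ (i % 2 = 1 % 2) from h), add_zero, mul_zero]
  have f0 : (if 0 % 2 = 0 % 2 then
      Nat.choose (m + 1) 0 * Nat.choose 0 ((0 + 0) / 2) else 0) = 1 := by norm_num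
  conv_lhs => rw [bsum, Finset.sum_range_succ']
  rw [Finset.sum_congr rfl key, f0, Finset.sum_add_distrib, ← Finset.mul_sum,
    sum_shift_zero m]
  have hb : (∑ i ∈ Finset.range (m + 1),
      if i % 2 = 1 % 2 then Nat.choose m i * Nat.choose i ((i + 1) / 2) else 0) = bsum m 1 := rfl
  rw [hb]
  ring

lemma cpath_eq_bsum : ∀ (m : ℕ) (d : ℕ), cpath m (d : ℤ) = bsum m d := by
  intro m
  induction m with
  | zero =>
    intro d
    have hb : bsum 0 d = if 0 % 2 = d % 2 then Nat.choose 0 (d / 2) else 0 := by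
      simp [bsum]
    rw [hb]
    match d with
    | 0 => simp [cpath]
    | 1 => simp [cpath]
    | (e + 2) =>
      have h1 : cpath 0 ((e + 2 : ℕ) : ℤ) = 0 := by
        simp only [cpath]
        rw [if_neg (by omega)]
      rw [h1]
      split_ifs with h
      · rw [Nat.choose_eq_zero_of_lt (by omega)]
      · rfl
  | succ m ih =>
    intro d
    match d with
    | 0 =>
      simp only [Nat.cast_zero, cpath]
      have hneg : cpath m ((0 : ℤ) - 1) = cpath m ((1 : ℕ) : ℤ) := by
        rw [show ((0 : ℤ) - 1) = -(((1 : ℕ) : ℤ)) by norm_num]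
        exact cpath_neg m _
      rw [hneg, show ((0 : ℤ) + 1) = ((1 : ℕ) : ℤ) by norm_num,
        show (0 : ℤ) = ((0 : ℕ) : ℤ) by norm_num, ih, ih, bsum_succ_zero]
      try ring
    | (e + 1) =>
      simp only [cpath]
      rw [show ((e + 1 : ℕ) : ℤ) - 1 = ((e : ℕ) : ℤ) by push_cast; ring,
        show ((e + 1 : ℕ) : ℤ) + 1 = ((e + 2 : ℕ) : ℤ) by push_cast; ring,
        ih (e + 1), ih e, ih (e + 2), bsum_succ_succ]
      try ring

lemma cpath_window : ∀ (m : ℕ) (d : ℤ), cpath m d + cpath m (d + 1) + cpath m (d + 2) ≤ 3 ^ m := by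
  intro m
  induction m with
  | zero =>
    intro d
    simp only [cpath, pow_zero]
    split_ifs <;> omega
  | succ m ih =>
    intro d
    have h1 := ih (d - 1)
    have h2 := ih d
    have h3 := ih (d + 1)
    simp only [cpath]
    rw [show d - 1 + 1 = d by ring, show d - 1 + 2 = d + 1 by ring] at h1
    rw [show d + 1 + 1 = d + 2 by ring, show d + 1 + 2 = d + 3 by ring] at h3
    rw [show d + 1 - 1 = d by ring, show d + 2 - 1 = d + 1 by ring,
      show d + 1 + 1 = d + 2 by ring, show d + 2 + 1 = d + 3 by ring, pow_succ]
    linarith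

lemma Tpow_apply (n : ℤ) : ∀ (m : ℕ) (p : ℤ),
    (((Splus + Sminus + LinearMap.id : (ℤ → ℝ) →ₗ[ℝ] (ℤ → ℝ))) ^ m) (deltaZ n) p
      = (cpath m (p - n) : ℝ) := by
  intro m
  induction m with
  | zero =>
    intro p
    simp only [pow_zero, Module.End.one_apply, deltaZ, cpath]
    by_cases h : p = n
    · rw [if_pos h, if_pos (by omega), Nat.cast_one]
    · rw [if_neg h, if_neg (by omega), Nat.cast_zero]
  | succ m ih =>
    intro p
    rw [pow_succ', Module.End.mul_apply]
    have expand : ∀ (g : ℤ → ℝ) (q : ℤ),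
        (Splus + Sminus + LinearMap.id : (ℤ → ℝ) →ₗ[ℝ] (ℤ → ℝ)) g q
          = g (q + 1) + g (q - 1) + g q := by
      intro g q
      rfl
    rw [expand, ih (p + 1), ih (p - 1), ih p]
    simp only [cpath]
    push_cast
    rw [show p + 1 - n = p - n + 1 by ring, show p - 1 - n = p - n - 1 by ring]
    ring

/-- With `T = S⁺ + S⁻ + I` on sequences over `ℤ`:
`η^{(j+1)} = ⟨δ_n, T^{j+1} δ_n⟩ = ∑_{k even} C(j+1,k) C(k,k/2)`,
`ξ^{(j+1)} = ⟨δ_{n+1}, T^{j+1} δ_n⟩ = ∑_{k odd} C(j+1,k) C(k,(k+1)/2)`,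
and `η^{(j+1)} ≤ 2 ξ^{(j+1)}`, `ξ^{(j+1)} ≤ 3^j`. -/
theorem stmt15 (j : ℕ) (n : ℤ) :
    let T : (ℤ → ℝ) →ₗ[ℝ] (ℤ → ℝ) := Splus + Sminus + LinearMap.id
    let η : ℕ := ∑ k ∈ Finset.range (j + 2),
      if Even k then Nat.choose (j + 1) k * Nat.choose k (k / 2) else 0
    let ξ : ℕ := ∑ k ∈ Finset.range (j + 2),
      if Odd k then Nat.choose (j + 1) k * Nat.choose k ((k + 1) / 2) else 0
    (T ^ (j + 1)) (deltaZ n) n = (η : ℝ) ∧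
    (T ^ (j + 1)) (deltaZ n) (n + 1) = (ξ : ℝ) ∧
    η ≤ 2 * ξ ∧ ξ ≤ 3 ^ j := by
  intro T η ξ
  have hη : η = bsum (j + 1) 0 := by
    unfold bsum
    refine Finset.sum_congr rfl fun k _ => ?_
    have hc : Even k ↔ k % 2 = 0 % 2 := by rw [Nat.even_iff]
    rw [if_congr hc rfl rfl]
    rfl
  have hξ : ξ = bsum (j + 1) 1 := by
    unfold bsum
    refine Finset.sum_congr rfl fun k _ => ?_
    have hc : Odd k ↔ k % 2 = 1 % 2 := by rw [Nat.odd_iff]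
    rw [if_congr hc rfl rfl]
  have key0 : bsum (j + 1) 0 = bsum j 0 + 2 * bsum j 1 := bsum_succ_zero j
  have key1 : bsum (j + 1) 1 = bsum j 0 + bsum j 1 + bsum j 2 := bsum_succ_succ j 0
  refine ⟨?_, ?_, ?_, ?_⟩
  · have h := Tpow_apply n (j + 1) n
    rw [sub_self, show (0 : ℤ) = ((0 : ℕ) : ℤ) from rfl, cpath_eq_bsum] at h
    rw [hη]
    exact h
  · have h := Tpow_apply n (j + 1) (n + 1)
    rw [add_sub_cancel_left, show (1 : ℤ) = ((1 : ℕ) : ℤ) from rfl, cpath_eq_bsum] at h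
    rw [hξ]
    exact h
  · rw [hη, hξ]
    omega
  · rw [hξ, key1]
    have h := cpath_window j 0
    rw [show ((0 : ℤ) + 1) = ((1 : ℕ) : ℤ) by norm_num,
      show ((0 : ℤ) + 2) = ((2 : ℕ) : ℤ) by norm_num,
      show (0 : ℤ) = ((0 : ℕ) : ℤ) from rfl, cpath_eq_bsum, cpath_eq_bsum, cpath_eq_bsum] at h
    exact h
end
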